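/- If the only nonnegative vector γ satisfying Nᵀγ = 0 is γ = 0, then the system N z ≥ d is feasible for every right-hand side d. -/

import Mathlib

/-- If the only nonnegative `γ` with `Nᵀ γ = 0` is `γ = 0`, then `N z ≥ d` is
feasible for every right-hand side `d`. -/
theorem feasible_of_trivial_nonneg_kernel
    (m n : ℕ) (N : Matrix (Fin m) (Fin n) ℝ)
    (h : ∀ γ : Fin m → ℝ, (∀ i, 0 ≤ γ i) → Matrix.vecMul γ N = 0 → γ = 0) :
    ∀ d : Fin m → ℝ, ∃ z : Fin n → ℝ, ∀ i, d i ≤ N.mulVec z i := by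
  intro d
  rcases Nat.eq_zero_or_pos m with hm | hm
  · exact ⟨0, fun i => absurd i.2 (by omega)⟩
  -- the linear map γ ↦ γᵀ N
  set L : (Fin m → ℝ) →ₗ[ℝ] (Fin n → ℝ) := N.vecMulLinear with hL
  set K : Set (Fin n → ℝ) := L '' stdSimplex ℝ (Fin m) with hK
  have hKconv : Convex ℝ K := (convex_stdSimplex ℝ _).linear_image L
  have hKcomp : IsCompact K :=
    (isCompact_stdSimplex ℝ _).image (LinearMap.continuous_of_finiteDimensional L)
  have h0 : (0 : Fin n → ℝ) ∉ K := by
    rintro ⟨γ, ⟨hγ0, hγ1⟩, hγ⟩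
    have : γ = 0 := h γ hγ0 (by simpa [hL, Matrix.vecMulLinear_apply] using hγ)
    rw [this] at hγ1
    simp at hγ1
  obtain ⟨f, u, hf0, hfK⟩ :=
    geometric_hahn_banach_point_closed hKconv hKcomp.isClosed h0
  have hu : 0 < u := by simpa using hf0
  have hfi : ∀ i, u < f (N i) := by
    intro i
    have hmem : (Pi.single i (1 : ℝ)) ∈ stdSimplex ℝ (Fin m) := by
      constructor
      · intro j; by_cases hij : j = i <;> simp [Pi.single_apply, hij]
      · simp
    have : L (Pi.single i 1) = N i := by
      funext j
      simp [hL, Matrix.vecMulLinear_apply, Matrix.vecMul, dotProduct,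
        Pi.single_apply, Finset.sum_ite_eq]
    have := hfK _ ⟨_, hmem, this⟩
    exact this
  -- define z from f
  set z : Fin n → ℝ := fun j => f fun k => if j = k then 1 else 0 with hz
  have hmul : ∀ i, N.mulVec z i = f (N i) := by
    intro i
    have hrep := LinearMap.pi_apply_eq_sum_univ (f.toLinearMap) (N i)
    simp only [ContinuousLinearMap.coe_coe] at hrep
    rw [hrep]
    simp [Matrix.mulVec, dotProduct, hz, smul_eq_mul]
  -- scale
  haveI : Nonempty (Fin m) := ⟨⟨0, hm⟩⟩
  set M := Finset.univ.sup' (Finset.univ_nonempty) d with hM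
  set c : ℝ := max 0 (M / u) with hc
  refine ⟨c • z, fun i => ?_⟩
  have h1 : N.mulVec (c • z) i = c * N.mulVec z i := by
    simp [Matrix.mulVec, dotProduct, Finset.mul_sum, mul_assoc, mul_left_comm]
  have hdi : d i ≤ M := Finset.le_sup' d (Finset.mem_univ i)
  have hcu : M ≤ c * u := by
    have : M / u ≤ c := le_max_right _ _
    calc M = (M / u) * u := by field_simp
    _ ≤ c * u := by nlinarith
  have hc0 : 0 ≤ c := le_max_left _ _
  have : c * u ≤ c * N.mulVec z i := by
    rw [hmul i]; nlinarith [hfi i]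
  linarith
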